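/- arXiv:2207.10240 — 2 statements merged into one kernel-verified Lean document; each statement's English description precedes it below -/
import Mathlib

section
/- Let U be a finite universe, S₁, …, S_m ⊆ U a family of sets with m ≥ 1 such that every u ∈ U belongs to at least one S_i, and ρ ∈ (0,1]. Construct the MobileVaccClinic instance on the real line with locations C = {1, …, m} ⊆ ℝ and, for each u ∈ U, a person p_u with travel set S_{p_u} = {i : u ∈ S_i}. Suppose the Partial Set Cover instance (U, {S₁,…,S_m}, ρ) has a feasible solution of size at most k. Then: (i) the optimal radius R* of the MobileVaccClinic instance with outliers and budget k equals 0; and (ii) every F ⊆ C with |F| ≤ k whose radius is strictly less than 1 (in particular, any F achieving radius at most α·R* = 0 for any finite α) satisfies |{u : d(S_{p_u}, F) = 0}| ≥ ⌊ρ|U|⌋, so {S_i : i ∈ F} is a feasible Partial Set Cover solution of size at most k. -/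
/-!
STATEMENT 6: In the reduction from Partial Set Cover to MobileVaccClinic on the
Euclidean line (locations `C = {1, …, m} ⊆ ℝ`, one person per element `u` with
travel set `{i : u ∈ S i}`), if the Partial Set Cover instance has a feasible
solution of size at most `k`, then (i) the optimal radius `R*` of the
MobileVaccClinic instance with outliers and budget `k` equals `0`, and (ii)
every `F ⊆ C` with `|F| ≤ k` achieving radius strictly less than `1` (in
particular radius at most `α · R* = 0` for any finite `α`) serves `⌊ρ|U|⌋`
people at distance `0`, and yields a feasible Partial Set Cover solution of
size at most `k`.
-/

attribute [local instance] Classical.propDecidable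

noncomputable section

/-- `d(A, B) = min_{j ∈ A, j' ∈ B} d(j, j')` for finite (nonempty) sets. -/
def setDist {C : Type*} [MetricSpace C] (A B : Finset C) : ℝ :=
  sInf {r : ℝ | ∃ j ∈ A, ∃ j' ∈ B, r = dist j j'}

/-- The point of the real line corresponding to index `i`, i.e. `i + 1 ∈ {1, …, m}`. -/
def loc {m : ℕ} (i : Fin m) : ℝ := (i : ℕ) + 1

/-- The location set `C = {1, 2, …, m} ⊆ ℝ`. -/
def Cset (m : ℕ) : Finset ℝ := (Finset.univ : Finset (Fin m)).image loc

/-- The travel set of the person corresponding to element `u`: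
`S_{p_u} = {i ∈ C : u ∈ S i}`. -/
def travel {U : Type*} [Fintype U] {m : ℕ} (S : Fin m → Finset U) (u : U) : Finset ℝ :=
  (Finset.univ.filter fun i : Fin m => u ∈ S i).image loc

/-- The optimal radius `R*` of a MobileVaccClinic instance with outliers on the
real line, with locations `C`, budget `k`, requirement `ρ`, and people indexed
by the fintype `ι` with travel sets `T p`. -/
def RstarLine (C : Finset ℝ) (k : ℕ) (ρ : ℝ) {ι : Type*} [Fintype ι]
    (T : ι → Finset ℝ) : ℝ :=
  sInf {R : ℝ | ∃ F : Finset ℝ, F ⊆ C ∧ F.Nonempty ∧ F.card ≤ k ∧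
    ⌊ρ * (Fintype.card ι : ℝ)⌋₊ ≤
      (Finset.univ.filter fun p : ι => setDist (T p) F ≤ R).card}

lemma distSet_eq {C : Type*} [MetricSpace C] (A B : Finset C) :
    {r : ℝ | ∃ j ∈ A, ∃ j' ∈ B, r = dist j j'} =
      ↑((A ×ˢ B).image fun p => dist p.1 p.2) := by
  ext r
  simp only [Set.mem_setOf_eq, Finset.coe_image, Set.mem_image, Finset.mem_coe,
    Finset.mem_product, Prod.exists]
  constructor
  · rintro ⟨j, hj, j', hj', rfl⟩; exact ⟨j, j', ⟨hj, hj'⟩, rfl⟩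
  · rintro ⟨j, j', ⟨hj, hj'⟩, rfl⟩; exact ⟨j, hj, j', hj', rfl⟩

lemma setDist_bddBelow {C : Type*} [MetricSpace C] (A B : Finset C) :
    BddBelow {r : ℝ | ∃ j ∈ A, ∃ j' ∈ B, r = dist j j'} := by
  refine ⟨0, ?_⟩
  rintro r ⟨j, hj, j', hj', rfl⟩
  exact dist_nonneg

lemma setDist_le {C : Type*} [MetricSpace C] {A B : Finset C} {a b : C}
    (ha : a ∈ A) (hb : b ∈ B) : setDist A B ≤ dist a b :=
  csInf_le (setDist_bddBelow A B) ⟨a, ha, b, hb, rfl⟩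

lemma setDist_nonneg {C : Type*} [MetricSpace C] {A B : Finset C}
    (hA : A.Nonempty) (hB : B.Nonempty) : 0 ≤ setDist A B := by
  obtain ⟨a, ha⟩ := hA; obtain ⟨b, hb⟩ := hB
  refine le_csInf ⟨dist a b, a, ha, b, hb, rfl⟩ ?_
  rintro r ⟨j, hj, j', hj', rfl⟩
  exact dist_nonneg

lemma setDist_attained {C : Type*} [MetricSpace C] {A B : Finset C}
    (hA : A.Nonempty) (hB : B.Nonempty) :
    ∃ a ∈ A, ∃ b ∈ B, setDist A B = dist a b := by
  obtain ⟨a, ha⟩ := hA; obtain ⟨b, hb⟩ := hB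
  have hfin : {r : ℝ | ∃ j ∈ A, ∃ j' ∈ B, r = dist j j'}.Finite := by
    rw [distSet_eq]; exact Finset.finite_toSet _
  have hne : {r : ℝ | ∃ j ∈ A, ∃ j' ∈ B, r = dist j j'}.Nonempty :=
    ⟨dist a b, a, ha, b, hb, rfl⟩
  exact hne.csInf_mem hfin

lemma loc_injective {m : ℕ} : Function.Injective (loc (m := m)) := by
  intro i j h
  unfold loc at h
  have : ((i : ℕ) : ℝ) = ((j : ℕ) : ℝ) := by linarith
  exact Fin.ext (Nat.cast_injective this)

lemma loc_dist_lt_one {m : ℕ} {i j : Fin m} (h : dist (loc i) (loc j) < 1) : i = j := by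
  by_contra hne
  have h1 : ((i : ℕ) : ℤ) ≠ ((j : ℕ) : ℤ) := by
    simpa using fun hh => hne (Fin.ext hh)
  have h2 : (1 : ℤ) ≤ |((i : ℕ) : ℤ) - ((j : ℕ) : ℤ)| :=
    Int.one_le_abs (sub_ne_zero.2 h1)
  have h3 : (1 : ℝ) ≤ |((i : ℕ) : ℝ) - ((j : ℕ) : ℝ)| := by
    exact_mod_cast h2
  rw [Real.dist_eq] at h
  unfold loc at h
  have : ((i : ℕ) : ℝ) + 1 - (((j : ℕ) : ℝ) + 1) = ((i : ℕ) : ℝ) - ((j : ℕ) : ℝ) := by ring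
  rw [this] at h
  linarith

theorem stmt6 {U : Type*} [Fintype U] (m : ℕ) (hm : 1 ≤ m)
    (S : Fin m → Finset U) (hcov : ∀ u : U, ∃ i, u ∈ S i)
    (ρ : ℝ) (hρ0 : 0 < ρ) (hρ1 : ρ ≤ 1) (k : ℕ)
    (hfeas : ∃ G : Finset (Fin m), G.card ≤ k ∧
      ⌊ρ * (Fintype.card U : ℝ)⌋₊ ≤ (G.biUnion S).card) :
    RstarLine (Cset m) k ρ (travel S) = 0 ∧
    (∀ F : Finset ℝ, F ⊆ Cset m → F.Nonempty → F.card ≤ k →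
      ∀ R : ℝ, R < 1 →
        ⌊ρ * (Fintype.card U : ℝ)⌋₊ ≤
          (Finset.univ.filter fun u : U => setDist (travel S u) F ≤ R).card →
        (⌊ρ * (Fintype.card U : ℝ)⌋₊ ≤
            (Finset.univ.filter fun u : U => setDist (travel S u) F = 0).card ∧
          ∃ G : Finset (Fin m), G.card ≤ k ∧ (∀ i ∈ G, loc i ∈ F) ∧
            ⌊ρ * (Fintype.card U : ℝ)⌋₊ ≤ (G.biUnion S).card)) := by
  set n := ⌊ρ * (Fintype.card U : ℝ)⌋₊ with hn
  have htrav : ∀ u : U, (travel S u).Nonempty := by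
    intro u
    obtain ⟨i, hi⟩ := hcov u
    exact ⟨loc i, Finset.mem_image.2 ⟨i, Finset.mem_filter.2 ⟨Finset.mem_univ _, hi⟩, rfl⟩⟩
  have htravmem : ∀ u : U, ∀ x ∈ travel S u, ∃ i : Fin m, x = loc i ∧ u ∈ S i := by
    intro u x hx
    obtain ⟨i, hi, rfl⟩ := Finset.mem_image.1 hx
    exact ⟨i, rfl, (Finset.mem_filter.1 hi).2⟩
  have hCmem : ∀ x ∈ Cset m, ∃ i : Fin m, x = loc i := by
    intro x hx
    obtain ⟨i, _, rfl⟩ := Finset.mem_image.1 hx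
    exact ⟨i, rfl⟩
  -- part (ii)
  have part2 : ∀ F : Finset ℝ, F ⊆ Cset m → F.Nonempty → F.card ≤ k →
      ∀ R : ℝ, R < 1 →
        n ≤ (Finset.univ.filter fun u : U => setDist (travel S u) F ≤ R).card →
        (n ≤ (Finset.univ.filter fun u : U => setDist (travel S u) F = 0).card ∧
          ∃ G : Finset (Fin m), G.card ≤ k ∧ (∀ i ∈ G, loc i ∈ F) ∧
            n ≤ (G.biUnion S).card) := by
    intro F hFC hFne hFk R hR hcard
    have hsub : (Finset.univ.filter fun u : U => setDist (travel S u) F ≤ R) ⊆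
        (Finset.univ.filter fun u : U => setDist (travel S u) F = 0) := by
      intro u hu
      have hle : setDist (travel S u) F ≤ R := (Finset.mem_filter.1 hu).2
      obtain ⟨a, ha, b, hb, heq⟩ := setDist_attained (htrav u) hFne
      obtain ⟨i, rfl, hui⟩ := htravmem u a ha
      obtain ⟨j, rfl⟩ := hCmem b (hFC hb)
      have hij : i = j := loc_dist_lt_one (lt_of_le_of_lt (heq ▸ hle) hR)
      subst hij
      refine Finset.mem_filter.2 ⟨Finset.mem_univ _, ?_⟩
      rw [heq, dist_self]
    have h0 : n ≤ (Finset.univ.filter fun u : U => setDist (travel S u) F = 0).card :=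
      le_trans hcard (Finset.card_le_card hsub)
    refine ⟨h0, ?_⟩
    set G : Finset (Fin m) := Finset.univ.filter (fun i => loc i ∈ F) with hG
    have hGF : G.image loc = F := by
      apply Finset.Subset.antisymm
      · intro x hx
        obtain ⟨i, hi, rfl⟩ := Finset.mem_image.1 hx
        exact (Finset.mem_filter.1 hi).2
      · intro x hx
        obtain ⟨i, rfl⟩ := hCmem x (hFC hx)
        exact Finset.mem_image.2 ⟨i, Finset.mem_filter.2 ⟨Finset.mem_univ _, hx⟩, rfl⟩
    have hGcard : G.card = F.card := by
      rw [← hGF, Finset.card_image_of_injective _ loc_injective]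
    refine ⟨G, hGcard ▸ hFk, fun i hi => (Finset.mem_filter.1 hi).2, ?_⟩
    refine le_trans h0 (Finset.card_le_card ?_)
    intro u hu
    have h0u : setDist (travel S u) F = 0 := (Finset.mem_filter.1 hu).2
    obtain ⟨a, ha, b, hb, heq⟩ := setDist_attained (htrav u) hFne
    obtain ⟨i, rfl, hui⟩ := htravmem u a ha
    have : dist (loc i) b = 0 := by rw [← heq, h0u]
    have hib : loc i = b := by
      have := dist_eq_zero.1 this
      exact this
    have hiG : i ∈ G := Finset.mem_filter.2 ⟨Finset.mem_univ _, hib ▸ hb⟩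
    exact Finset.mem_biUnion.2 ⟨i, hiG, hui⟩
  refine ⟨?_, part2⟩
  -- part (i)
  rw [RstarLine]
  set D : Set ℝ := {R : ℝ | ∃ F : Finset ℝ, F ⊆ Cset m ∧ F.Nonempty ∧ F.card ≤ k ∧
    ⌊ρ * (Fintype.card U : ℝ)⌋₊ ≤
      (Finset.univ.filter fun p : U => setDist (travel S p) F ≤ R).card} with hD
  rcases Nat.eq_zero_or_pos n with hn0 | hn1
  · rcases Nat.eq_zero_or_pos k with hk0 | hk1
    · have : D = ∅ := by
        ext R
        simp only [hD, Set.mem_setOf_eq, Set.mem_empty_iff_false, iff_false]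
        rintro ⟨F, _, hFne, hFk, _⟩
        rw [hk0, Nat.le_zero, Finset.card_eq_zero] at hFk
        exact hFne.ne_empty hFk
      rw [this, Real.sInf_empty]
    · have hmemD : ∀ R : ℝ, R ∈ D := by
        intro R
        refine ⟨{loc (⟨0, hm⟩ : Fin m)}, ?_, Finset.singleton_nonempty _, ?_, ?_⟩
        · intro x hx
          rw [Finset.mem_singleton] at hx
          exact hx ▸ Finset.mem_image.2 ⟨_, Finset.mem_univ _, rfl⟩
        · rw [Finset.card_singleton]; exact hk1
        · rw [← hn, hn0]; exact Nat.zero_le _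
      have : ¬BddBelow D := by
        rintro ⟨b, hb⟩
        have := hb (hmemD (b - 1))
        linarith
      exact Real.sInf_of_not_bddBelow this
  · obtain ⟨G, hGk, hGcov⟩ := hfeas
    have hGne : G.Nonempty := by
      rcases G.eq_empty_or_nonempty with rfl | h
      · simp only [Finset.biUnion_empty, Finset.card_empty] at hGcov
        omega
      · exact h
    have h0D : (0 : ℝ) ∈ D := by
      refine ⟨G.image loc, ?_, hGne.image _, ?_, ?_⟩
      · intro x hx
        obtain ⟨i, _, rfl⟩ := Finset.mem_image.1 hx
        exact Finset.mem_image.2 ⟨i, Finset.mem_univ _, rfl⟩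
      · exact le_trans (Finset.card_image_le) hGk
      · refine le_trans hGcov (Finset.card_le_card ?_)
        intro u hu
        obtain ⟨i, hiG, hui⟩ := Finset.mem_biUnion.1 hu
        refine Finset.mem_filter.2 ⟨Finset.mem_univ _, ?_⟩
        have hal : loc i ∈ travel S u :=
          Finset.mem_image.2 ⟨i, Finset.mem_filter.2 ⟨Finset.mem_univ _, hui⟩, rfl⟩
        have := setDist_le hal (Finset.mem_image_of_mem loc hiG)
        rwa [dist_self] at this
    have hlb : ∀ R ∈ D, (0 : ℝ) ≤ R := by
      rintro R ⟨F, hFC, hFne, hFk, hcard⟩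
      have : (Finset.univ.filter fun u : U => setDist (travel S u) F ≤ R).Nonempty := by
        rw [← Finset.card_pos]
        omega
      obtain ⟨u, hu⟩ := this
      have h1 := (Finset.mem_filter.1 hu).2
      have h2 := setDist_nonneg (htrav u) hFne
      linarith
    exact le_antisymm (csInf_le ⟨0, hlb⟩ h0D) (le_csInf ⟨0, h0D⟩ hlb)

end
end

section
/- Fix ε ≥ 0 and δ ≥ 0. Let M be any randomized mechanism that takes a Partial Set Cover instance (with a fixed public set family S and requirement ρ, and private universe U) and outputs a random subfamily of S, and suppose M is (ε, δ)-differentially private with respect to neighboring universes. If there is p such that on every Partial Set Cover instance M outputs an optimal solution with probability at least p, then p ≤ (e^ε + δ)/(1 + e^ε). In particular, when δ < 1, no (ε, δ)-differentially private mechanism can solve Partial Set Cover exactly with probability tending to 1. -/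
open scoped ENNReal

/-!
STATEMENT 9: Fix `ε, δ ≥ 0`. Let `M` be any randomized mechanism taking a
Partial Set Cover instance (public family `S : Fin m → Finset ℕ` and
requirement `ρ`, private universe `U : Finset ℕ`) to a distribution over
subfamilies (index sets `G : Finset (Fin m)`), and suppose `M` is
`(ε, δ)`-differentially private with respect to universes differing in exactly
one element. If `M` outputs an optimal solution with probability at least `p`
on every instance, then `p ≤ (e^ε + δ) / (1 + e^ε)`.
-/

/-- Neighboring universes: they differ in exactly one element. -/
def NeighborU (U U' : Finset ℕ) : Prop :=
  ∃ x : ℕ, (U' = insert x U ∧ x ∉ U) ∨ (U = insert x U' ∧ x ∉ U')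

/-- Feasibility for Partial Set Cover: the subfamily indexed by `G` covers at
least `⌊ρ|U|⌋` elements of the universe `U`. -/
def pscFeasible {m : ℕ} (S : Fin m → Finset ℕ) (ρ : ℝ) (U : Finset ℕ)
    (G : Finset (Fin m)) : Prop :=
  ⌊ρ * (U.card : ℝ)⌋₊ ≤ ((G.biUnion S) ∩ U).card

/-- Optimality: feasible of minimum cardinality. -/
def pscOptimal {m : ℕ} (S : Fin m → Finset ℕ) (ρ : ℝ) (U : Finset ℕ)
    (G : Finset (Fin m)) : Prop :=
  pscFeasible S ρ U G ∧
    ∀ G' : Finset (Fin m), pscFeasible S ρ U G' → G.card ≤ G'.card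

noncomputable def S1 : Fin 1 → Finset ℕ := fun _ => {0}

lemma fin1_cases (G : Finset (Fin 1)) : G = ∅ ∨ G = {0} := by
  have : G ⊆ {0} := by
    intro x _; simp [Fin.eq_zero x]
  exact Finset.subset_singleton_iff.mp this

lemma opt_empty (G : Finset (Fin 1)) : pscOptimal S1 1 ∅ G ↔ G = ∅ := by
  constructor
  · rintro ⟨_, hmin⟩
    have := hmin ∅ (by simp [pscFeasible])
    simpa [Finset.card_eq_zero] using this
  · rintro rfl
    exact ⟨by simp [pscFeasible], fun G' _ => by simp⟩

lemma feas_one (G : Finset (Fin 1)) : pscFeasible S1 1 {0} G ↔ G = {0} := by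
  rcases fin1_cases G with rfl | rfl
  · simp only [pscFeasible, S1]
    simp [Ne.symm (Finset.singleton_ne_empty (0 : Fin 1))]
  · simp [pscFeasible, S1]

lemma opt_one (G : Finset (Fin 1)) : pscOptimal S1 1 {0} G ↔ G = {0} := by
  constructor
  · rintro ⟨hfeas, _⟩; exact (feas_one G).mp hfeas
  · rintro rfl
    refine ⟨(feas_one _).mpr rfl, fun G' hG' => ?_⟩
    rw [(feas_one G').mp hG']

theorem stmt9 (ε δ : ℝ) (hε : 0 ≤ ε) (hδ : 0 ≤ δ)
    (M : ∀ m : ℕ, (Fin m → Finset ℕ) → ℝ → Finset ℕ → PMF (Finset (Fin m)))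
    (hDP : ∀ (m : ℕ) (S : Fin m → Finset ℕ) (ρ : ℝ) (U U' : Finset ℕ),
      NeighborU U U' → ∀ E : Set (Finset (Fin m)),
        (M m S ρ U).toOuterMeasure E ≤
          ENNReal.ofReal (Real.exp ε) * (M m S ρ U').toOuterMeasure E +
            ENNReal.ofReal δ)
    (p : ℝ≥0∞)
    (hutil : ∀ (m : ℕ) (S : Fin m → Finset ℕ) (ρ : ℝ) (U : Finset ℕ),
      0 < ρ → ρ ≤ 1 →
      p ≤ (M m S ρ U).toOuterMeasure {G | pscOptimal S ρ U G}) :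
    p ≤ (ENNReal.ofReal (Real.exp ε) + ENNReal.ofReal δ) /
      (1 + ENNReal.ofReal (Real.exp ε)) := by
  set q := M 1 S1 1 ({0} : Finset ℕ) with hq
  set q' := M 1 S1 1 (∅ : Finset ℕ) with hq'
  set e := ENNReal.ofReal (Real.exp ε) with he
  -- events
  have hE1 : {G : Finset (Fin 1) | pscOptimal S1 1 {0} G} = {({0} : Finset (Fin 1))} := by
    ext G; simpa using opt_one G
  have hE0 : {G : Finset (Fin 1) | pscOptimal S1 1 ∅ G} = {(∅ : Finset (Fin 1))} := by
    ext G; simpa using opt_empty G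
  have h1 : p ≤ q ({0} : Finset (Fin 1)) := by
    have := hutil 1 S1 1 ({0} : Finset ℕ) one_pos le_rfl
    rwa [hE1, PMF.toOuterMeasure_apply_singleton] at this
  have h0 : p ≤ q' (∅ : Finset (Fin 1)) := by
    have := hutil 1 S1 1 (∅ : Finset ℕ) one_pos le_rfl
    rwa [hE0, PMF.toOuterMeasure_apply_singleton] at this
  -- neighbor
  have hnb : NeighborU ({0} : Finset ℕ) (∅ : Finset ℕ) :=
    ⟨0, Or.inr ⟨by simp, by simp⟩⟩
  have hdp := hDP 1 S1 1 ({0} : Finset ℕ) (∅ : Finset ℕ) hnb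
    ({({0} : Finset (Fin 1))} : Set (Finset (Fin 1)))
  rw [PMF.toOuterMeasure_apply_singleton, PMF.toOuterMeasure_apply_singleton] at hdp
  -- q' {0} ≤ 1 - p
  have hsum : q' ({0} : Finset (Fin 1)) + q' (∅ : Finset (Fin 1)) ≤ 1 := by
    have := q'.tsum_coe
    calc q' ({0} : Finset (Fin 1)) + q' (∅ : Finset (Fin 1))
        = ∑ x ∈ ({({0} : Finset (Fin 1)), (∅ : Finset (Fin 1))} : Finset (Finset (Fin 1))), q' x := by
          rw [Finset.sum_pair (by simp)]
      _ ≤ ∑' x, q' x := ENNReal.sum_le_tsum _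
      _ = 1 := q'.tsum_coe
  have hp1 : p ≤ 1 := h0.trans (q'.coe_le_one _)
  have hq'le : q' ({0} : Finset (Fin 1)) ≤ 1 - p := by
    have : q' ({0} : Finset (Fin 1)) + p ≤ 1 :=
      (add_le_add_right h0 _).trans hsum
    exact ENNReal.le_sub_of_add_le_right (hp1.trans_lt ENNReal.one_lt_top).ne this
  -- main inequality: p ≤ e * (1 - p) + δ
  have hmain : p ≤ e * (1 - p) + ENNReal.ofReal δ := by
    refine h1.trans (hdp.trans ?_)
    exact add_le_add (mul_le_mul_right hq'le e) le_rfl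
  -- algebra
  have hene : e ≠ ⊤ := ENNReal.ofReal_ne_top
  rw [ENNReal.le_div_iff_mul_le (Or.inl (by simp)) (Or.inl (by
    simp [ENNReal.add_ne_top, hene]))]
  calc p * (1 + e) = p + p * e := by ring
    _ ≤ (e * (1 - p) + ENNReal.ofReal δ) + p * e := add_le_add hmain le_rfl
    _ = (e * (1 - p) + e * p) + ENNReal.ofReal δ := by ring
    _ = e * ((1 - p) + p) + ENNReal.ofReal δ := by rw [mul_add]
    _ = e + ENNReal.ofReal δ := by rw [tsub_add_cancel_of_le hp1, mul_one]
end
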